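/- Let n ≥ 1 and let α, β ∈ {−1,1}^n be random vectors, defined on a common probability space, such that α and β are independent of each other, the entries of α are 4-wise independent and each uniform on {−1,1}, and likewise for β. Then for every fixed real array (f_{ij})_{i,j∈[n]}: E[(Σ_{i,j∈[n]} α_i β_j f_{ij})²] = Σ_{i,j∈[n]} f_{ij}², and Var[(Σ_{i,j∈[n]} α_i β_j f_{ij})²] ≤ 9 (Σ_{i,j∈[n]} f_{ij}²)². -/

import Mathlib

open MeasureTheory ProbabilityTheory

section SignAux

variable {Ω : Type*} [MeasurableSpace Ω] {μ : Measure Ω} [IsProbabilityMeasure μ] {n : ℕ}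

/-- Kronecker delta as a real number. -/
def del {n : ℕ} (i j : Fin n) : ℝ := if i = j then 1 else 0

variable {X : Ω → Fin n → ℝ}

lemma sign_int {h : Ω → ℝ} {C : ℝ}
    (hm : Measurable h) (hb : ∀ ω, |h ω| ≤ C) : Integrable h μ :=
  Integrable.mono' (integrable_const C) hm.aestronglyMeasurable
    (Filter.Eventually.of_forall fun ω => by simpa using hb ω)

lemma sign_E0 (hXm : ∀ i, Measurable fun ω => X ω i)
    (hXv : ∀ ω i, X ω i = 1 ∨ X ω i = -1)
    (hXu : ∀ i, μ {ω | X ω i = 1} = 1/2 ∧ μ {ω | X ω i = -1} = 1/2) (i : Fin n) :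
    ∫ ω, X ω i ∂μ = 0 := by
  have hA : MeasurableSet {ω | X ω i = 1} := (hXm i) (measurableSet_singleton 1)
  have hB : MeasurableSet {ω | X ω i = -1} := (hXm i) (measurableSet_singleton (-1))
  have hfun : (fun ω => X ω i) = fun ω =>
      Set.indicator {ω | X ω i = 1} (fun _ => (1:ℝ)) ω
      - Set.indicator {ω | X ω i = -1} (fun _ => (1:ℝ)) ω := by
    funext ω
    rcases hXv ω i with h | h <;>
      simp [Set.indicator_apply, Set.mem_setOf_eq, h] <;> norm_num
  rw [hfun, integral_sub, integral_indicator_const _ hA, integral_indicator_const _ hB,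
    measureReal_def, measureReal_def, (hXu i).1, (hXu i).2]
  · simp
  · exact (integrable_indicator_iff hA).2 (integrableOn_const (measure_ne_top μ _))
  · exact (integrable_indicator_iff hB).2 (integrableOn_const (measure_ne_top μ _))

lemma sign_indep2 (hXm : ∀ i, Measurable fun ω => X ω i)
    (h4 : ∀ s : Finset (Fin n), s.card ≤ 4 →
      iIndepFun (m := fun _ : s => (inferInstance : MeasurableSpace ℝ))
        (fun i : s => fun ω => X ω i.1) μ)
    {i k : Fin n} (hik : i ≠ k) :
    IndepFun (fun ω => X ω i) (fun ω => X ω k) μ := by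
  have hs : ({i, k} : Finset (Fin n)).card ≤ 4 :=
    le_trans (Finset.card_insert_le _ _) (by simp)
  exact (h4 {i, k} hs).indepFun (i := ⟨i, by simp⟩) (j := ⟨k, by simp⟩)
    (by simp [Subtype.ext_iff, hik])

lemma sign_E2 (hXm : ∀ i, Measurable fun ω => X ω i)
    (hXv : ∀ ω i, X ω i = 1 ∨ X ω i = -1)
    (hXu : ∀ i, μ {ω | X ω i = 1} = 1/2 ∧ μ {ω | X ω i = -1} = 1/2)
    (h4 : ∀ s : Finset (Fin n), s.card ≤ 4 →
      iIndepFun (m := fun _ : s => (inferInstance : MeasurableSpace ℝ))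
        (fun i : s => fun ω => X ω i.1) μ)
    {i k : Fin n} (hik : i ≠ k) :
    ∫ ω, X ω i * X ω k ∂μ = 0 := by
  have := (sign_indep2 hXm h4 hik).integral_mul_eq_mul_integral
    (hXm i).aestronglyMeasurable (hXm k).aestronglyMeasurable
  have heq : (∫ ω, X ω i * X ω k ∂μ)
      = (∫ ω, X ω i ∂μ) * ∫ ω, X ω k ∂μ := this
  rw [heq, sign_E0 hXm hXv hXu, zero_mul]

lemma sign_mom2 (hXm : ∀ i, Measurable fun ω => X ω i)
    (hXv : ∀ ω i, X ω i = 1 ∨ X ω i = -1)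
    (hXu : ∀ i, μ {ω | X ω i = 1} = 1/2 ∧ μ {ω | X ω i = -1} = 1/2)
    (h4 : ∀ s : Finset (Fin n), s.card ≤ 4 →
      iIndepFun (m := fun _ : s => (inferInstance : MeasurableSpace ℝ))
        (fun i : s => fun ω => X ω i.1) μ)
    (i k : Fin n) :
    ∫ ω, X ω i * X ω k ∂μ = del i k := by
  rcases eq_or_ne i k with h | h
  · subst h
    have : (fun ω => X ω i * X ω i) = fun _ => (1:ℝ) := by
      funext ω; rcases hXv ω i with h | h <;> rw [h] <;> norm_num
    rw [this, del]; simp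
  · rw [sign_E2 hXm hXv hXu h4 h, del, if_neg h]

lemma sign_E4 (hXm : ∀ i, Measurable fun ω => X ω i)
    (hXv : ∀ ω i, X ω i = 1 ∨ X ω i = -1)
    (hXu : ∀ i, μ {ω | X ω i = 1} = 1/2 ∧ μ {ω | X ω i = -1} = 1/2)
    (h4 : ∀ s : Finset (Fin n), s.card ≤ 4 →
      iIndepFun (m := fun _ : s => (inferInstance : MeasurableSpace ℝ))
        (fun i : s => fun ω => X ω i.1) μ)
    {i1 i2 i3 i4 : Fin n} (h12 : i1 ≠ i2) (h13 : i1 ≠ i3) (h14 : i1 ≠ i4)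
    (h23 : i2 ≠ i3) (h24 : i2 ≠ i4) :
    ∫ ω, X ω i1 * X ω i2 * X ω i3 * X ω i4 ∂μ = 0 := by
  classical
  have hs : ({i1, i2, i3, i4} : Finset (Fin n)).card ≤ 4 := by
    refine le_trans (Finset.card_insert_le _ _) ?_
    refine le_trans (Nat.add_le_add_right (Finset.card_insert_le _ _) 1) ?_
    refine le_trans (Nat.add_le_add_right (Nat.add_le_add_right (Finset.card_insert_le _ _) 1) 1) ?_
    simp
  have hind := (h4 {i1, i2, i3, i4} hs).indepFun_mul_mul (fun j => hXm j.1)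
    ⟨i1, by simp⟩ ⟨i2, by simp⟩ ⟨i3, by simp⟩ ⟨i4, by simp⟩
    (by simp [Subtype.ext_iff, h13]) (by simp [Subtype.ext_iff, h14])
    (by simp [Subtype.ext_iff, h23]) (by simp [Subtype.ext_iff, h24])
  have heq : (∫ ω, X ω i1 * X ω i2 * X ω i3 * X ω i4 ∂μ)
      = (∫ ω, X ω i1 * X ω i2 ∂μ) * ∫ ω, X ω i3 * X ω i4 ∂μ := by
    have := hind.integral_mul_eq_mul_integral (((hXm i1).mul (hXm i2)).aestronglyMeasurable)
      (((hXm i3).mul (hXm i4)).aestronglyMeasurable)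
    have h' : (∫ ω, (X ω i1 * X ω i2) * (X ω i3 * X ω i4) ∂μ)
        = (∫ ω, X ω i1 * X ω i2 ∂μ) * ∫ ω, X ω i3 * X ω i4 ∂μ := this
    rw [← h']
    congr 1; funext ω; ring
  rw [heq, sign_E2 hXm hXv hXu h4 h12, zero_mul]


lemma sign_mom4 (hXm : ∀ i, Measurable fun ω => X ω i)
    (hXv : ∀ ω i, X ω i = 1 ∨ X ω i = -1)
    (hXu : ∀ i, μ {ω | X ω i = 1} = 1/2 ∧ μ {ω | X ω i = -1} = 1/2)
    (h4 : ∀ s : Finset (Fin n), s.card ≤ 4 →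
      iIndepFun (m := fun _ : s => (inferInstance : MeasurableSpace ℝ))
        (fun i : s => fun ω => X ω i.1) μ)
    (i1 i2 i3 i4 : Fin n) :
    ∫ ω, X ω i1 * X ω i2 * X ω i3 * X ω i4 ∂μ
      = del i1 i2 * del i3 i4 + del i1 i3 * del i2 i4 + del i1 i4 * del i2 i3
        - 2 * (del i1 i2 * del i1 i3 * del i1 i4) := by
  rcases eq_or_ne i1 i2 with rfl | h12
  · rcases eq_or_ne i1 i3 with rfl | h13
    · rcases eq_or_ne i1 i4 with rfl | h14
      · -- all equal
        have hpt : (fun ω => X ω i1 * X ω i1 * X ω i1 * X ω i1) = fun _ => (1:ℝ) := by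
          funext ω; rcases hXv ω i1 with h | h <;> rw [h] <;> norm_num
        rw [hpt]; simp [del]; norm_num
      · -- (i,i,i,k)
        have hpt : (fun ω => X ω i1 * X ω i1 * X ω i1 * X ω i4)
            = fun ω => X ω i1 * X ω i4 := by
          funext ω; rcases hXv ω i1 with h | h <;> rw [h] <;> ring
        rw [hpt, sign_E2 hXm hXv hXu h4 h14]; simp [del, h14]
    · rcases eq_or_ne i1 i4 with rfl | h14
      · -- (i,i,k,i)
        have hpt : (fun ω => X ω i1 * X ω i1 * X ω i3 * X ω i1)
            = fun ω => X ω i1 * X ω i3 := by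
          funext ω; rcases hXv ω i1 with h | h <;> rw [h] <;> ring
        rw [hpt, sign_E2 hXm hXv hXu h4 h13]; simp [del, h13, Ne.symm h13]
      · rcases eq_or_ne i3 i4 with rfl | h34
        · -- (i,i,k,k)
          have hpt : (fun ω => X ω i1 * X ω i1 * X ω i3 * X ω i3) = fun _ => (1:ℝ) := by
            funext ω; rcases hXv ω i1 with h | h <;> rcases hXv ω i3 with h' | h' <;>
              rw [h, h'] <;> norm_num
          rw [hpt]; simp [del, h13]
        · -- (i,i,k,l)
          have hpt : (fun ω => X ω i1 * X ω i1 * X ω i3 * X ω i4)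
              = fun ω => X ω i3 * X ω i4 := by
            funext ω; rcases hXv ω i1 with h | h <;> rw [h] <;> ring
          rw [hpt, sign_E2 hXm hXv hXu h4 h34]; simp [del, h13, h14, h34]
  · rcases eq_or_ne i1 i3 with rfl | h13
    · rcases eq_or_ne i2 i4 with rfl | h24
      · -- (i,k,i,k)
        have hpt : (fun ω => X ω i1 * X ω i2 * X ω i1 * X ω i2) = fun _ => (1:ℝ) := by
          funext ω; rcases hXv ω i1 with h | h <;> rcases hXv ω i2 with h' | h' <;>
            rw [h, h'] <;> norm_num
        rw [hpt]; simp [del, h12, Ne.symm h12]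
      · rcases eq_or_ne i1 i4 with rfl | h14
        · -- (i,k,i,i)
          have hpt : (fun ω => X ω i1 * X ω i2 * X ω i1 * X ω i1)
              = fun ω => X ω i1 * X ω i2 := by
            funext ω; rcases hXv ω i1 with h | h <;> rw [h] <;> ring
          rw [hpt, sign_E2 hXm hXv hXu h4 h12]; simp [del, h12, Ne.symm h12, h24]
        · -- (i,k,i,l)
          have hpt : (fun ω => X ω i1 * X ω i2 * X ω i1 * X ω i4)
              = fun ω => X ω i2 * X ω i4 := by
            funext ω; rcases hXv ω i1 with h | h <;> rw [h] <;> ring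
          rw [hpt, sign_E2 hXm hXv hXu h4 h24]; simp [del, h12, h14, h24]
    · rcases eq_or_ne i1 i4 with rfl | h14
      · rcases eq_or_ne i2 i3 with rfl | h23
        · -- (i,k,k,i)
          have hpt : (fun ω => X ω i1 * X ω i2 * X ω i2 * X ω i1) = fun _ => (1:ℝ) := by
            funext ω; rcases hXv ω i1 with h | h <;> rcases hXv ω i2 with h' | h' <;>
              rw [h, h'] <;> norm_num
          rw [hpt]; simp [del, h12, Ne.symm h12]
        · -- (i,k,l,i)
          have hpt : (fun ω => X ω i1 * X ω i2 * X ω i3 * X ω i1)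
              = fun ω => X ω i2 * X ω i3 := by
            funext ω; rcases hXv ω i1 with h | h <;> rw [h] <;> ring
          rw [hpt, sign_E2 hXm hXv hXu h4 h23]; simp [del, h12, h13, h23]
      · rcases eq_or_ne i2 i3 with rfl | h23
        · rcases eq_or_ne i2 i4 with rfl | h24
          · -- (i,k,k,k)
            have hpt : (fun ω => X ω i1 * X ω i2 * X ω i2 * X ω i2)
                = fun ω => X ω i1 * X ω i2 := by
              funext ω; rcases hXv ω i2 with h | h <;> rw [h] <;> ring
            rw [hpt, sign_E2 hXm hXv hXu h4 h12]; simp [del, h12]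
          · -- (i,k,k,l)
            have hpt : (fun ω => X ω i1 * X ω i2 * X ω i2 * X ω i4)
                = fun ω => X ω i1 * X ω i4 := by
              funext ω; rcases hXv ω i2 with h | h <;> rw [h] <;> ring
            rw [hpt, sign_E2 hXm hXv hXu h4 h14]; simp [del, h12, h14, h24]
        · rcases eq_or_ne i2 i4 with rfl | h24
          · -- (i,k,l,k)
            have hpt : (fun ω => X ω i1 * X ω i2 * X ω i3 * X ω i2)
                = fun ω => X ω i1 * X ω i3 := by
              funext ω; rcases hXv ω i2 with h | h <;> rw [h] <;> ring
            rw [hpt, sign_E2 hXm hXv hXu h4 h13]; simp [del, h12, h13, h14, h23,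
              Ne.symm h23]
          · rcases eq_or_ne i3 i4 with rfl | h34
            · -- (i,k,l,l)
              have hpt : (fun ω => X ω i1 * X ω i2 * X ω i3 * X ω i3)
                  = fun ω => X ω i1 * X ω i2 := by
                funext ω; rcases hXv ω i3 with h | h <;> rw [h] <;> ring
              rw [hpt, sign_E2 hXm hXv hXu h4 h12]; simp [del, h12, h13, h23]
            · -- all distinct
              rw [sign_E4 hXm hXv hXu h4 h12 h13 h14 h23 h24]
              simp [del, h12, h13, h14, h23, h24, h34]




lemma prod4_sum (a b c d : Fin n → ℝ) :
    (∑ j, a j) * (∑ j, b j) * (∑ j, c j) * (∑ j, d j)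
      = ∑ j1, ∑ j2, ∑ j3, ∑ j4, a j1 * b j2 * c j3 * d j4 := by
  calc (∑ j, a j) * (∑ j, b j) * (∑ j, c j) * (∑ j, d j)
      = ∑ j1, a j1 * (∑ j, b j) * (∑ j, c j) * (∑ j, d j) := by
        rw [Finset.sum_mul, Finset.sum_mul, Finset.sum_mul]
    _ = ∑ j1, ∑ j2, a j1 * b j2 * (∑ j, c j) * (∑ j, d j) :=
        Finset.sum_congr rfl fun j1 _ => by
          rw [show a j1 * (∑ j, b j) = ∑ j2, a j1 * b j2 from Finset.mul_sum _ _ _,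
            Finset.sum_mul, Finset.sum_mul]
    _ = ∑ j1, ∑ j2, ∑ j3, a j1 * b j2 * c j3 * (∑ j, d j) :=
        Finset.sum_congr rfl fun j1 _ => Finset.sum_congr rfl fun j2 _ => by
          rw [show a j1 * b j2 * (∑ j, c j) = ∑ j3, a j1 * b j2 * c j3 from Finset.mul_sum _ _ _,
            Finset.sum_mul]
    _ = ∑ j1, ∑ j2, ∑ j3, ∑ j4, a j1 * b j2 * c j3 * d j4 :=
        Finset.sum_congr rfl fun j1 _ => Finset.sum_congr rfl fun j2 _ =>
          Finset.sum_congr rfl fun j3 _ => by rw [Finset.mul_sum]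

lemma collapseA (F : Fin n → Fin n → Fin n → Fin n → ℝ) :
    ∑ j1, ∑ j2, ∑ j3, ∑ j4, F j1 j2 j3 j4 * (del j1 j2 * del j3 j4)
      = ∑ i, ∑ k, F i i k k := by
  simp [del, mul_ite, ite_mul, Finset.sum_ite_eq, Finset.sum_ite_eq']

lemma collapseB (F : Fin n → Fin n → Fin n → Fin n → ℝ) :
    ∑ j1, ∑ j2, ∑ j3, ∑ j4, F j1 j2 j3 j4 * (del j1 j3 * del j2 j4)
      = ∑ i, ∑ k, F i k i k := by
  simp [del, mul_ite, ite_mul, Finset.sum_ite_eq, Finset.sum_ite_eq']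

lemma collapseC (F : Fin n → Fin n → Fin n → Fin n → ℝ) :
    ∑ j1, ∑ j2, ∑ j3, ∑ j4, F j1 j2 j3 j4 * (del j1 j4 * del j2 j3)
      = ∑ i, ∑ k, F i k k i := by
  simp [del, mul_ite, ite_mul, Finset.sum_ite_eq, Finset.sum_ite_eq']

lemma collapseQ (F : Fin n → Fin n → Fin n → Fin n → ℝ) :
    ∑ j1, ∑ j2, ∑ j3, ∑ j4, F j1 j2 j3 j4 * (del j1 j2 * del j1 j3 * del j1 j4)
      = ∑ i, F i i i i := by
  simp [del, mul_ite, ite_mul, Finset.sum_ite_eq, Finset.sum_ite_eq']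

lemma collapse2 (F : Fin n → Fin n → ℝ) :
    ∑ j1, ∑ j2, F j1 j2 * del j1 j2 = ∑ i, F i i := by
  simp [del, mul_ite, ite_mul, Finset.sum_ite_eq, Finset.sum_ite_eq']

lemma prod2_sum (a b : Fin n → ℝ) :
    (∑ j, a j) * (∑ j, b j) = ∑ j1, ∑ j2, a j1 * b j2 := by
  rw [Finset.sum_mul_sum]

-- integrability of bounded products of signs and constants
lemma sign_abs (hXv : ∀ ω i, X ω i = 1 ∨ X ω i = -1) (ω : Ω) (i : Fin n) :
    |X ω i| = 1 := by rcases hXv ω i with h | h <;> rw [h] <;> norm_num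

lemma g_mom2 (hXm : ∀ i, Measurable fun ω => X ω i)
    (hXv : ∀ ω i, X ω i = 1 ∨ X ω i = -1)
    (hXu : ∀ i, μ {ω | X ω i = 1} = 1/2 ∧ μ {ω | X ω i = -1} = 1/2)
    (h4 : ∀ s : Finset (Fin n), s.card ≤ 4 →
      iIndepFun (m := fun _ : s => (inferInstance : MeasurableSpace ℝ))
        (fun i : s => fun ω => X ω i.1) μ)
    (f : Fin n → Fin n → ℝ) (i k : Fin n) :
    ∫ ω, (∑ j, X ω j * f i j) * (∑ j, X ω j * f k j) ∂μ = ∑ j, f i j * f k j := by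
  have hint : ∀ j1 j2 : Fin n,
      Integrable (fun ω => X ω j1 * f i j1 * (X ω j2 * f k j2)) μ := by
    intro j1 j2
    refine sign_int (((hXm j1).mul_const _).mul ((hXm j2).mul_const _)) (C := |f i j1| * |f k j2|) ?_
    intro ω
    rw [abs_mul, abs_mul, abs_mul, sign_abs hXv, sign_abs hXv, one_mul, one_mul]
  have hpt : ∀ ω, (∑ j, X ω j * f i j) * (∑ j, X ω j * f k j)
      = ∑ j1, ∑ j2, X ω j1 * f i j1 * (X ω j2 * f k j2) := by
    intro ω; rw [prod2_sum]
  calc ∫ ω, (∑ j, X ω j * f i j) * (∑ j, X ω j * f k j) ∂μ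
      = ∫ ω, ∑ j1, ∑ j2, X ω j1 * f i j1 * (X ω j2 * f k j2) ∂μ := by
        exact integral_congr_ae (Filter.Eventually.of_forall fun ω => hpt ω)
    _ = ∑ j1, ∑ j2, ∫ ω, X ω j1 * f i j1 * (X ω j2 * f k j2) ∂μ := by
        rw [integral_finset_sum _ fun j1 _ => integrable_finset_sum _ fun j2 _ => hint j1 j2]
        exact Finset.sum_congr rfl fun j1 _ => integral_finset_sum _ fun j2 _ => hint j1 j2
    _ = ∑ j1, ∑ j2, (f i j1 * f k j2) * del j1 j2 := by
        refine Finset.sum_congr rfl fun j1 _ => Finset.sum_congr rfl fun j2 _ => ?_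
        have : (fun ω => X ω j1 * f i j1 * (X ω j2 * f k j2))
            = fun ω => (f i j1 * f k j2) * (X ω j1 * X ω j2) := by funext ω; ring
        rw [this, integral_const_mul, sign_mom2 hXm hXv hXu h4]
    _ = ∑ j, f i j * f k j := collapse2 _

lemma g_mom4 (hXm : ∀ i, Measurable fun ω => X ω i)
    (hXv : ∀ ω i, X ω i = 1 ∨ X ω i = -1)
    (hXu : ∀ i, μ {ω | X ω i = 1} = 1/2 ∧ μ {ω | X ω i = -1} = 1/2)
    (h4 : ∀ s : Finset (Fin n), s.card ≤ 4 →
      iIndepFun (m := fun _ : s => (inferInstance : MeasurableSpace ℝ))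
        (fun i : s => fun ω => X ω i.1) μ)
    (f : Fin n → Fin n → ℝ) (i1 i2 i3 i4 : Fin n) :
    ∫ ω, (∑ j, X ω j * f i1 j) * (∑ j, X ω j * f i2 j) * (∑ j, X ω j * f i3 j)
        * (∑ j, X ω j * f i4 j) ∂μ
      = (∑ j, f i1 j * f i2 j) * (∑ j, f i3 j * f i4 j)
      + (∑ j, f i1 j * f i3 j) * (∑ j, f i2 j * f i4 j)
      + (∑ j, f i1 j * f i4 j) * (∑ j, f i2 j * f i3 j)
      - 2 * ∑ j, f i1 j * f i2 j * f i3 j * f i4 j := by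
  have hint : ∀ j1 j2 j3 j4 : Fin n,
      Integrable (fun ω => X ω j1 * f i1 j1 * (X ω j2 * f i2 j2) * (X ω j3 * f i3 j3)
        * (X ω j4 * f i4 j4)) μ := by
    intro j1 j2 j3 j4
    refine sign_int ((((hXm j1).mul_const _).mul ((hXm j2).mul_const _)).mul
      ((hXm j3).mul_const _) |>.mul ((hXm j4).mul_const _))
      (C := |f i1 j1| * |f i2 j2| * |f i3 j3| * |f i4 j4|) ?_
    intro ω
    rw [abs_mul, abs_mul, abs_mul, abs_mul, abs_mul, abs_mul, abs_mul,
      sign_abs hXv, sign_abs hXv, sign_abs hXv, sign_abs hXv]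
    ring_nf
    exact le_refl _
  calc ∫ ω, (∑ j, X ω j * f i1 j) * (∑ j, X ω j * f i2 j) * (∑ j, X ω j * f i3 j)
        * (∑ j, X ω j * f i4 j) ∂μ
      = ∫ ω, ∑ j1, ∑ j2, ∑ j3, ∑ j4, X ω j1 * f i1 j1 * (X ω j2 * f i2 j2)
          * (X ω j3 * f i3 j3) * (X ω j4 * f i4 j4) ∂μ := by
        exact integral_congr_ae (Filter.Eventually.of_forall fun ω => prod4_sum _ _ _ _)
    _ = ∑ j1, ∑ j2, ∑ j3, ∑ j4, ∫ ω, X ω j1 * f i1 j1 * (X ω j2 * f i2 j2)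
          * (X ω j3 * f i3 j3) * (X ω j4 * f i4 j4) ∂μ := by
        rw [integral_finset_sum _ fun j1 _ => integrable_finset_sum _ fun j2 _ =>
          integrable_finset_sum _ fun j3 _ => integrable_finset_sum _ fun j4 _ =>
            hint j1 j2 j3 j4]
        refine Finset.sum_congr rfl fun j1 _ => ?_
        rw [integral_finset_sum _ fun j2 _ => integrable_finset_sum _ fun j3 _ =>
          integrable_finset_sum _ fun j4 _ => hint j1 j2 j3 j4]
        refine Finset.sum_congr rfl fun j2 _ => ?_
        rw [integral_finset_sum _ fun j3 _ => integrable_finset_sum _ fun j4 _ =>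
          hint j1 j2 j3 j4]
        refine Finset.sum_congr rfl fun j3 _ => ?_
        rw [integral_finset_sum _ fun j4 _ => hint j1 j2 j3 j4]
    _ = ∑ j1, ∑ j2, ∑ j3, ∑ j4, (f i1 j1 * f i2 j2 * f i3 j3 * f i4 j4)
          * (del j1 j2 * del j3 j4 + del j1 j3 * del j2 j4 + del j1 j4 * del j2 j3
             - 2 * (del j1 j2 * del j1 j3 * del j1 j4)) := by
        refine Finset.sum_congr rfl fun j1 _ => Finset.sum_congr rfl fun j2 _ =>
          Finset.sum_congr rfl fun j3 _ => Finset.sum_congr rfl fun j4 _ => ?_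
        have hre : (fun ω => X ω j1 * f i1 j1 * (X ω j2 * f i2 j2) * (X ω j3 * f i3 j3)
            * (X ω j4 * f i4 j4))
            = fun ω => (f i1 j1 * f i2 j2 * f i3 j3 * f i4 j4)
                * (X ω j1 * X ω j2 * X ω j3 * X ω j4) := by funext ω; ring
        rw [hre, integral_const_mul, sign_mom4 hXm hXv hXu h4]
    _ = ∑ j1, ∑ j2, ∑ j3, ∑ j4, ((f i1 j1 * f i2 j2 * f i3 j3 * f i4 j4)
            * (del j1 j2 * del j3 j4)
          + (f i1 j1 * f i2 j2 * f i3 j3 * f i4 j4) * (del j1 j3 * del j2 j4)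
          + (f i1 j1 * f i2 j2 * f i3 j3 * f i4 j4) * (del j1 j4 * del j2 j3)
          - 2 * ((f i1 j1 * f i2 j2 * f i3 j3 * f i4 j4)
              * (del j1 j2 * del j1 j3 * del j1 j4))) := by
        refine Finset.sum_congr rfl fun j1 _ => Finset.sum_congr rfl fun j2 _ =>
          Finset.sum_congr rfl fun j3 _ => Finset.sum_congr rfl fun j4 _ => by ring
    _ = (∑ j1, ∑ j2, ∑ j3, ∑ j4, (f i1 j1 * f i2 j2 * f i3 j3 * f i4 j4)
            * (del j1 j2 * del j3 j4))
        + (∑ j1, ∑ j2, ∑ j3, ∑ j4, (f i1 j1 * f i2 j2 * f i3 j3 * f i4 j4)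
            * (del j1 j3 * del j2 j4))
        + (∑ j1, ∑ j2, ∑ j3, ∑ j4, (f i1 j1 * f i2 j2 * f i3 j3 * f i4 j4)
            * (del j1 j4 * del j2 j3))
        - 2 * ∑ j1, ∑ j2, ∑ j3, ∑ j4, (f i1 j1 * f i2 j2 * f i3 j3 * f i4 j4)
            * (del j1 j2 * del j1 j3 * del j1 j4) := by
        simp only [Finset.sum_add_distrib, Finset.sum_sub_distrib, ← Finset.mul_sum]
    _ = (∑ j, f i1 j * f i2 j) * (∑ j, f i3 j * f i4 j)
      + (∑ j, f i1 j * f i3 j) * (∑ j, f i2 j * f i4 j)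
      + (∑ j, f i1 j * f i4 j) * (∑ j, f i2 j * f i3 j)
      - 2 * ∑ j, f i1 j * f i2 j * f i3 j * f i4 j := by
        rw [collapseA (fun j1 j2 j3 j4 => f i1 j1 * f i2 j2 * f i3 j3 * f i4 j4),
          collapseB (fun j1 j2 j3 j4 => f i1 j1 * f i2 j2 * f i3 j3 * f i4 j4),
          collapseC (fun j1 j2 j3 j4 => f i1 j1 * f i2 j2 * f i3 j3 * f i4 j4),
          collapseQ (fun j1 j2 j3 j4 => f i1 j1 * f i2 j2 * f i3 j3 * f i4 j4)]
        have e1 : (∑ j, f i1 j * f i2 j) * (∑ j, f i3 j * f i4 j)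
            = ∑ i, ∑ k, f i1 i * f i2 i * f i3 k * f i4 k := by
          rw [prod2_sum]
          exact Finset.sum_congr rfl fun i _ => Finset.sum_congr rfl fun k _ => by ring
        have e2 : (∑ j, f i1 j * f i3 j) * (∑ j, f i2 j * f i4 j)
            = ∑ i, ∑ k, f i1 i * f i2 k * f i3 i * f i4 k := by
          rw [prod2_sum]
          exact Finset.sum_congr rfl fun i _ => Finset.sum_congr rfl fun k _ => by ring
        have e3 : (∑ j, f i1 j * f i4 j) * (∑ j, f i2 j * f i3 j)
            = ∑ i, ∑ k, f i1 i * f i2 k * f i3 k * f i4 i := by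
          rw [prod2_sum]
          exact Finset.sum_congr rfl fun i _ => Finset.sum_congr rfl fun k _ => by ring
        rw [e1, e2, e3]


/-- row inner product -/
def cf (f : Fin n → Fin n → ℝ) (a b : Fin n) : ℝ := ∑ j, f a j * f b j

/-- quadruple row correlation -/
def dq (f : Fin n → Fin n → ℝ) (a b c d : Fin n) : ℝ :=
  ∑ j, f a j * f b j * f c j * f d j

/-- fourth moment of one row-bilinear form -/
def Bq (f : Fin n → Fin n → ℝ) (a b c d : Fin n) : ℝ :=
  cf f a b * cf f c d + cf f a c * cf f b d + cf f a d * cf f b c - 2 * dq f a b c d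

lemma cf_symm (f : Fin n → Fin n → ℝ) (a b : Fin n) : cf f a b = cf f b a :=
  Finset.sum_congr rfl fun j _ => mul_comm _ _

lemma cf_sq_le (f : Fin n → Fin n → ℝ) (a b : Fin n) :
    cf f a b ^ 2 ≤ cf f a a * cf f b b := by
  have h := Finset.sum_mul_sq_le_sq_mul_sq Finset.univ (fun j => f a j) (fun j => f b j)
  calc cf f a b ^ 2 ≤ (∑ j, f a j ^ 2) * (∑ j, f b j ^ 2) := h
    _ = cf f a a * cf f b b := by
        unfold cf
        congr 1 <;> exact Finset.sum_congr rfl fun j _ => sq _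

lemma cf_nonneg (f : Fin n → Fin n → ℝ) (a : Fin n) : 0 ≤ cf f a a :=
  Finset.sum_nonneg fun j _ => mul_self_nonneg _

lemma dq_pair_nonneg (f : Fin n → Fin n → ℝ) (a b : Fin n) : 0 ≤ dq f a a b b :=
  Finset.sum_nonneg fun j _ => by nlinarith [sq_nonneg (f a j * f b j)]

lemma dq_perm1 (f : Fin n → Fin n → ℝ) (a b : Fin n) : dq f a b a b = dq f a a b b :=
  Finset.sum_congr rfl fun j _ => by ring

lemma dq_perm2 (f : Fin n → Fin n → ℝ) (a b : Fin n) : dq f a b b a = dq f a a b b :=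
  Finset.sum_congr rfl fun j _ => by ring

lemma dq_diag_le (f : Fin n → Fin n → ℝ) (a : Fin n) : dq f a a a a ≤ cf f a a ^ 2 := by
  have h : dq f a a a a = ∑ j, (f a j * f a j) ^ 2 :=
    Finset.sum_congr rfl fun j _ => by ring
  rw [h]
  have := Finset.sum_sq_le_sq_sum_of_nonneg
    (f := fun j => f a j * f a j) (s := Finset.univ)
    (fun j _ => mul_self_nonneg _)
  calc ∑ j, (f a j * f a j) ^ 2 ≤ (∑ j, f a j * f a j) ^ 2 := this
    _ = cf f a a ^ 2 := rfl

lemma Bq_diag_nonneg (f : Fin n → Fin n → ℝ) (a : Fin n) : 0 ≤ Bq f a a a a := by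
  have h1 := dq_diag_le f a
  have h2 := cf_nonneg f a
  unfold Bq
  nlinarith [sq_nonneg (cf f a a)]

lemma Bq_triple_le (f : Fin n → Fin n → ℝ) (i k : Fin n) :
    Bq f i i k k + Bq f i k i k + Bq f i k k i ≤ 9 * (cf f i i * cf f k k) := by
  have h1 := cf_sq_le f i k
  have h2 := dq_pair_nonneg f i k
  have hs := cf_symm f i k
  have hp1 := dq_perm1 f i k
  have hp2 := dq_perm2 f i k
  unfold Bq
  rw [hp1, hp2, ← hs]
  nlinarith [sq_nonneg (cf f i k)]

theorem final_bound (f : Fin n → Fin n → ℝ) :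
    (∑ i, ∑ k, Bq f i i k k) + (∑ i, ∑ k, Bq f i k i k) + (∑ i, ∑ k, Bq f i k k i)
      - 2 * (∑ i, Bq f i i i i) ≤ 9 * (∑ i, ∑ j, f i j ^ 2) ^ 2 := by
  have hM : (∑ i, ∑ j, f i j ^ 2) = ∑ i, cf f i i :=
    Finset.sum_congr rfl fun i _ => Finset.sum_congr rfl fun j _ => sq _
  have hMsq : (∑ i, ∑ j, f i j ^ 2) ^ 2 = ∑ i, ∑ k, cf f i i * cf f k k := by
    rw [hM, sq, Finset.sum_mul_sum]
  have h1 : (∑ i, ∑ k, Bq f i i k k) + (∑ i, ∑ k, Bq f i k i k) + (∑ i, ∑ k, Bq f i k k i)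
      = ∑ i, ∑ k, (Bq f i i k k + Bq f i k i k + Bq f i k k i) := by
    simp [Finset.sum_add_distrib]
  have h2 : ∑ i, ∑ k, (Bq f i i k k + Bq f i k i k + Bq f i k k i)
      ≤ ∑ i, ∑ k, 9 * (cf f i i * cf f k k) :=
    Finset.sum_le_sum fun i _ => Finset.sum_le_sum fun k _ => Bq_triple_le f i k
  have h3 : 0 ≤ ∑ i, Bq f i i i i := Finset.sum_nonneg fun i _ => Bq_diag_nonneg f i
  have h4 : ∑ i, ∑ k, 9 * (cf f i i * cf f k k) = 9 * ∑ i, ∑ k, cf f i i * cf f k k := by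
    simp [Finset.mul_sum]
  rw [hMsq, h1]
  linarith

lemma g_mom4Bq (hXm : ∀ i, Measurable fun ω => X ω i)
    (hXv : ∀ ω i, X ω i = 1 ∨ X ω i = -1)
    (hXu : ∀ i, μ {ω | X ω i = 1} = 1/2 ∧ μ {ω | X ω i = -1} = 1/2)
    (h4 : ∀ s : Finset (Fin n), s.card ≤ 4 →
      iIndepFun (m := fun _ : s => (inferInstance : MeasurableSpace ℝ))
        (fun i : s => fun ω => X ω i.1) μ)
    (f : Fin n → Fin n → ℝ) (i1 i2 i3 i4 : Fin n) :
    ∫ ω, (∑ j, X ω j * f i1 j) * (∑ j, X ω j * f i2 j) * (∑ j, X ω j * f i3 j)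
        * (∑ j, X ω j * f i4 j) ∂μ = Bq f i1 i2 i3 i4 := by
  rw [g_mom4 hXm hXv hXu h4 f i1 i2 i3 i4]; rfl


end SignAux

/-- if `α, β ∈ {−1,1}^n` are independent random vectors whose entries are
4-wise independent and uniform on `{−1,1}`, then for every fixed array `f`
the random variable `X = (Σ_{i,j} α_i β_j f_{ij})²` satisfies
`E[X] = Σ_{i,j} f_{ij}²` and `Var[X] ≤ 9 (Σ_{i,j} f_{ij}²)²`. -/
theorem bilinear_sketch_moments {Ω : Type*} [MeasurableSpace Ω] (μ : Measure Ω)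
    [IsProbabilityMeasure μ] {n : ℕ} (hn : 1 ≤ n)
    (α β : Ω → Fin n → ℝ)
    (hαmeas : ∀ i, Measurable fun ω => α ω i)
    (hβmeas : ∀ i, Measurable fun ω => β ω i)
    (hαval : ∀ ω i, α ω i = 1 ∨ α ω i = -1)
    (hβval : ∀ ω i, β ω i = 1 ∨ β ω i = -1)
    (hαunif : ∀ i, μ {ω | α ω i = 1} = 1/2 ∧ μ {ω | α ω i = -1} = 1/2)
    (hβunif : ∀ i, μ {ω | β ω i = 1} = 1/2 ∧ μ {ω | β ω i = -1} = 1/2)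
    (hα4 : ∀ s : Finset (Fin n), s.card ≤ 4 →
      iIndepFun (m := fun _ : s => (inferInstance : MeasurableSpace ℝ))
        (fun i : s => fun ω => α ω i.1) μ)
    (hβ4 : ∀ s : Finset (Fin n), s.card ≤ 4 →
      iIndepFun (m := fun _ : s => (inferInstance : MeasurableSpace ℝ))
        (fun i : s => fun ω => β ω i.1) μ)
    (hαβ : IndepFun α β μ)
    (f : Fin n → Fin n → ℝ) :
    (∫ ω, (∑ i, ∑ j, α ω i * β ω j * f i j) ^ 2 ∂μ = ∑ i, ∑ j, (f i j) ^ 2) ∧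
    variance (fun ω => (∑ i, ∑ j, α ω i * β ω j * f i j) ^ 2) μ ≤
      9 * (∑ i, ∑ j, (f i j) ^ 2) ^ 2 := by
  classical
  -- abbreviations
  have hαm : Measurable α := measurable_pi_lambda α hαmeas
  have hβm : Measurable β := measurable_pi_lambda β hβmeas
  have hgm : ∀ i, Measurable (fun ω => ∑ j, β ω j * f i j) := fun i =>
    Finset.measurable_sum _ fun j _ => (hβmeas j).mul_const _
  set L : ℝ := ∑ i, ∑ j, |f i j| with hLdef
  have hL0 : 0 ≤ L := Finset.sum_nonneg fun i _ => Finset.sum_nonneg fun j _ => abs_nonneg _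
  have hgb : ∀ (i : Fin n) ω, |∑ j, β ω j * f i j| ≤ L := by
    intro i ω
    calc |∑ j, β ω j * f i j| ≤ ∑ j, |β ω j * f i j| := Finset.abs_sum_le_sum_abs _ _
      _ = ∑ j, |f i j| := Finset.sum_congr rfl fun j _ => by
          rw [abs_mul, sign_abs hβval, one_mul]
      _ ≤ L := Finset.single_le_sum (f := fun i => ∑ j, |f i j|)
          (fun i _ => Finset.sum_nonneg fun j _ => abs_nonneg _) (Finset.mem_univ i)
  have hfb : ∀ (i : Fin n) ω, |α ω i * ∑ j, β ω j * f i j| ≤ L := by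
    intro i ω; rw [abs_mul, sign_abs hαval, one_mul]; exact hgb i ω
  -- pointwise rewrite of the bilinear sum
  have hS : ∀ ω, (∑ i, ∑ j, α ω i * β ω j * f i j)
      = ∑ i, α ω i * ∑ j, β ω j * f i j := by
    intro ω
    refine Finset.sum_congr rfl fun i _ => ?_
    rw [Finset.mul_sum]
    exact Finset.sum_congr rfl fun j _ => by ring
  -- factorization for pairs
  have hfact2 : ∀ i k : Fin n,
      (∫ ω, (α ω i * α ω k) * ((∑ j, β ω j * f i j) * (∑ j, β ω j * f k j)) ∂μ)
        = (∫ ω, α ω i * α ω k ∂μ)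
          * ∫ ω, (∑ j, β ω j * f i j) * (∑ j, β ω j * f k j) ∂μ := by
    intro i k
    have hφ : Measurable fun v : Fin n → ℝ => v i * v k :=
      (measurable_pi_apply i).mul (measurable_pi_apply k)
    have hψ : Measurable fun v : Fin n → ℝ => (∑ j, v j * f i j) * (∑ j, v j * f k j) :=
      (Finset.measurable_sum _ fun j _ => (measurable_pi_apply j).mul_const _).mul
        (Finset.measurable_sum _ fun j _ => (measurable_pi_apply j).mul_const _)
    have h := (hαβ.comp hφ hψ).integral_mul_eq_mul_integral
      ((hφ.comp hαm).aestronglyMeasurable) ((hψ.comp hβm).aestronglyMeasurable)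
    exact h
  -- integrability for the pair expansion
  have hint2 : ∀ i k : Fin n, Integrable
      (fun ω => (α ω i * α ω k) * ((∑ j, β ω j * f i j) * (∑ j, β ω j * f k j))) μ := by
    intro i k
    refine sign_int (((hαmeas i).mul (hαmeas k)).mul ((hgm i).mul (hgm k))) (C := L * L) ?_
    intro ω
    rw [abs_mul, abs_mul, abs_mul, sign_abs hαval, sign_abs hαval, one_mul, one_mul]
    exact mul_le_mul (hgb i ω) (hgb k ω) (abs_nonneg _) hL0
  -- Part 1 : the expectation
  have hE : (∫ ω, (∑ i, ∑ j, α ω i * β ω j * f i j) ^ 2 ∂μ) = ∑ i, ∑ j, (f i j) ^ 2 := by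
    calc ∫ ω, (∑ i, ∑ j, α ω i * β ω j * f i j) ^ 2 ∂μ
        = ∫ ω, ∑ i, ∑ k, (α ω i * α ω k)
            * ((∑ j, β ω j * f i j) * (∑ j, β ω j * f k j)) ∂μ := by
          refine integral_congr_ae (Filter.Eventually.of_forall fun ω => ?_)
          dsimp only
          rw [hS ω, sq, prod2_sum]
          exact Finset.sum_congr rfl fun i _ => Finset.sum_congr rfl fun k _ => by ring
      _ = ∑ i, ∑ k, ∫ ω, (α ω i * α ω k)
            * ((∑ j, β ω j * f i j) * (∑ j, β ω j * f k j)) ∂μ := by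
          rw [integral_finset_sum _ fun i _ => integrable_finset_sum _ fun k _ => hint2 i k]
          exact Finset.sum_congr rfl fun i _ => integral_finset_sum _ fun k _ => hint2 i k
      _ = ∑ i, ∑ k, (∑ j, f i j * f k j) * del i k := by
          refine Finset.sum_congr rfl fun i _ => Finset.sum_congr rfl fun k _ => ?_
          rw [hfact2 i k, sign_mom2 hαmeas hαval hαunif hα4,
            g_mom2 hβmeas hβval hβunif hβ4 f i k, mul_comm]
      _ = ∑ i, ∑ j, f i j * f i j := collapse2 _
      _ = ∑ i, ∑ j, (f i j) ^ 2 :=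
          Finset.sum_congr rfl fun i _ => Finset.sum_congr rfl fun j _ => (sq _).symm
  refine ⟨hE, ?_⟩
  -- Part 2 : the variance
  have hSmeas : Measurable fun ω => ∑ i, ∑ j, α ω i * β ω j * f i j :=
    Finset.measurable_sum _ fun i _ => Finset.measurable_sum _ fun j _ =>
      ((hαmeas i).mul (hβmeas j)).mul_const _
  have hXmeas : Measurable fun ω => (∑ i, ∑ j, α ω i * β ω j * f i j) ^ 2 :=
    hSmeas.pow_const 2
  have hSb : ∀ ω, |∑ i, ∑ j, α ω i * β ω j * f i j| ≤ L := by
    intro ω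
    rw [hS ω]
    calc |∑ i, α ω i * ∑ j, β ω j * f i j|
        ≤ ∑ i, |α ω i * ∑ j, β ω j * f i j| := Finset.abs_sum_le_sum_abs _ _
      _ ≤ ∑ i, ∑ j, |f i j| := Finset.sum_le_sum fun i _ => by
          rw [abs_mul, sign_abs hαval, one_mul]
          calc |∑ j, β ω j * f i j| ≤ ∑ j, |β ω j * f i j| := Finset.abs_sum_le_sum_abs _ _
            _ = ∑ j, |f i j| := Finset.sum_congr rfl fun j _ => by
                rw [abs_mul, sign_abs hβval, one_mul]
      _ = L := rfl
  have hXb : ∀ ω, |(∑ i, ∑ j, α ω i * β ω j * f i j) ^ 2| ≤ L ^ 2 := by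
    intro ω
    rw [abs_pow]
    exact pow_le_pow_left₀ (abs_nonneg _) (hSb ω) 2
  have hmem : MemLp (fun ω => (∑ i, ∑ j, α ω i * β ω j * f i j) ^ 2) 2 μ :=
    MemLp.of_bound hXmeas.aestronglyMeasurable (L ^ 2)
      (Filter.Eventually.of_forall fun ω => by
        simpa [Real.norm_eq_abs] using hXb ω)
  -- integrability for the quadruple expansion
  have hint4 : ∀ i1 i2 i3 i4 : Fin n, Integrable
      (fun ω => (α ω i1 * ∑ j, β ω j * f i1 j) * (α ω i2 * ∑ j, β ω j * f i2 j)
        * (α ω i3 * ∑ j, β ω j * f i3 j) * (α ω i4 * ∑ j, β ω j * f i4 j)) μ := by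
    intro i1 i2 i3 i4
    refine sign_int ((((hαmeas i1).mul (hgm i1)).mul ((hαmeas i2).mul (hgm i2))).mul
      ((hαmeas i3).mul (hgm i3)) |>.mul ((hαmeas i4).mul (hgm i4)))
      (C := L * L * L * L) ?_
    intro ω
    rw [abs_mul, abs_mul, abs_mul]
    exact mul_le_mul (mul_le_mul (mul_le_mul (hfb i1 ω) (hfb i2 ω) (abs_nonneg _) hL0)
      (hfb i3 ω) (abs_nonneg _) (mul_nonneg hL0 hL0)) (hfb i4 ω) (abs_nonneg _)
      (by positivity)
  -- factorization for quadruples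
  have hfact4 : ∀ i1 i2 i3 i4 : Fin n,
      (∫ ω, (α ω i1 * α ω i2 * α ω i3 * α ω i4)
        * ((∑ j, β ω j * f i1 j) * (∑ j, β ω j * f i2 j) * (∑ j, β ω j * f i3 j)
          * (∑ j, β ω j * f i4 j)) ∂μ)
        = (∫ ω, α ω i1 * α ω i2 * α ω i3 * α ω i4 ∂μ)
          * ∫ ω, (∑ j, β ω j * f i1 j) * (∑ j, β ω j * f i2 j) * (∑ j, β ω j * f i3 j)
              * (∑ j, β ω j * f i4 j) ∂μ := by
    intro i1 i2 i3 i4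
    have hφ : Measurable fun v : Fin n → ℝ => v i1 * v i2 * v i3 * v i4 :=
      (((measurable_pi_apply i1).mul (measurable_pi_apply i2)).mul
        (measurable_pi_apply i3)).mul (measurable_pi_apply i4)
    have hψ : Measurable fun v : Fin n → ℝ =>
        (∑ j, v j * f i1 j) * (∑ j, v j * f i2 j) * (∑ j, v j * f i3 j)
          * (∑ j, v j * f i4 j) :=
      (((Finset.measurable_sum _ fun j _ => (measurable_pi_apply j).mul_const _).mul
        (Finset.measurable_sum _ fun j _ => (measurable_pi_apply j).mul_const _)).mul
        (Finset.measurable_sum _ fun j _ => (measurable_pi_apply j).mul_const _)).mul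
        (Finset.measurable_sum _ fun j _ => (measurable_pi_apply j).mul_const _)
    have h := (hαβ.comp hφ hψ).integral_mul_eq_mul_integral
      ((hφ.comp hαm).aestronglyMeasurable) ((hψ.comp hβm).aestronglyMeasurable)
    exact h
  -- the fourth moment
  have hE4 : (∫ ω, ((∑ i, ∑ j, α ω i * β ω j * f i j) ^ 2) ^ 2 ∂μ)
      = (∑ i, ∑ k, Bq f i i k k) + (∑ i, ∑ k, Bq f i k i k) + (∑ i, ∑ k, Bq f i k k i)
        - 2 * (∑ i, Bq f i i i i) := by
    calc ∫ ω, ((∑ i, ∑ j, α ω i * β ω j * f i j) ^ 2) ^ 2 ∂μ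
        = ∫ ω, ∑ i1, ∑ i2, ∑ i3, ∑ i4,
            (α ω i1 * ∑ j, β ω j * f i1 j) * (α ω i2 * ∑ j, β ω j * f i2 j)
            * (α ω i3 * ∑ j, β ω j * f i3 j) * (α ω i4 * ∑ j, β ω j * f i4 j) ∂μ := by
          refine integral_congr_ae (Filter.Eventually.of_forall fun ω => ?_)
          dsimp only
          rw [hS ω, show ((∑ i, α ω i * ∑ j, β ω j * f i j) ^ 2) ^ 2
            = (∑ i, α ω i * ∑ j, β ω j * f i j) * (∑ i, α ω i * ∑ j, β ω j * f i j)
              * (∑ i, α ω i * ∑ j, β ω j * f i j)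
              * (∑ i, α ω i * ∑ j, β ω j * f i j) from by ring, prod4_sum]
      _ = ∑ i1, ∑ i2, ∑ i3, ∑ i4, ∫ ω,
            (α ω i1 * ∑ j, β ω j * f i1 j) * (α ω i2 * ∑ j, β ω j * f i2 j)
            * (α ω i3 * ∑ j, β ω j * f i3 j) * (α ω i4 * ∑ j, β ω j * f i4 j) ∂μ := by
          rw [integral_finset_sum _ fun i1 _ => integrable_finset_sum _ fun i2 _ =>
            integrable_finset_sum _ fun i3 _ => integrable_finset_sum _ fun i4 _ =>
              hint4 i1 i2 i3 i4]
          refine Finset.sum_congr rfl fun i1 _ => ?_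
          rw [integral_finset_sum _ fun i2 _ => integrable_finset_sum _ fun i3 _ =>
            integrable_finset_sum _ fun i4 _ => hint4 i1 i2 i3 i4]
          refine Finset.sum_congr rfl fun i2 _ => ?_
          rw [integral_finset_sum _ fun i3 _ => integrable_finset_sum _ fun i4 _ =>
            hint4 i1 i2 i3 i4]
          refine Finset.sum_congr rfl fun i3 _ => ?_
          rw [integral_finset_sum _ fun i4 _ => hint4 i1 i2 i3 i4]
      _ = ∑ i1, ∑ i2, ∑ i3, ∑ i4,
            (del i1 i2 * del i3 i4 + del i1 i3 * del i2 i4 + del i1 i4 * del i2 i3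
              - 2 * (del i1 i2 * del i1 i3 * del i1 i4)) * Bq f i1 i2 i3 i4 := by
          refine Finset.sum_congr rfl fun i1 _ => Finset.sum_congr rfl fun i2 _ =>
            Finset.sum_congr rfl fun i3 _ => Finset.sum_congr rfl fun i4 _ => ?_
          have hre : (fun ω => (α ω i1 * ∑ j, β ω j * f i1 j)
              * (α ω i2 * ∑ j, β ω j * f i2 j) * (α ω i3 * ∑ j, β ω j * f i3 j)
              * (α ω i4 * ∑ j, β ω j * f i4 j))
              = fun ω => (α ω i1 * α ω i2 * α ω i3 * α ω i4)
                * ((∑ j, β ω j * f i1 j) * (∑ j, β ω j * f i2 j) * (∑ j, β ω j * f i3 j)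
                  * (∑ j, β ω j * f i4 j)) := by funext ω; ring
          rw [hre, hfact4 i1 i2 i3 i4, sign_mom4 hαmeas hαval hαunif hα4,
            g_mom4Bq hβmeas hβval hβunif hβ4 f i1 i2 i3 i4]
      _ = ∑ i1, ∑ i2, ∑ i3, ∑ i4,
            (Bq f i1 i2 i3 i4 * (del i1 i2 * del i3 i4)
            + Bq f i1 i2 i3 i4 * (del i1 i3 * del i2 i4)
            + Bq f i1 i2 i3 i4 * (del i1 i4 * del i2 i3)
            - 2 * (Bq f i1 i2 i3 i4 * (del i1 i2 * del i1 i3 * del i1 i4))) := by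
          refine Finset.sum_congr rfl fun i1 _ => Finset.sum_congr rfl fun i2 _ =>
            Finset.sum_congr rfl fun i3 _ => Finset.sum_congr rfl fun i4 _ => by ring
      _ = (∑ i, ∑ k, Bq f i i k k) + (∑ i, ∑ k, Bq f i k i k) + (∑ i, ∑ k, Bq f i k k i)
          - 2 * (∑ i, Bq f i i i i) := by
          simp only [Finset.sum_add_distrib, Finset.sum_sub_distrib, ← Finset.mul_sum]
          rw [collapseA (fun a b c d => Bq f a b c d), collapseB (fun a b c d => Bq f a b c d),
            collapseC (fun a b c d => Bq f a b c d), collapseQ (fun a b c d => Bq f a b c d)]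
  -- conclude
  have hvar := variance_eq_sub hmem
  rw [hvar]
  have hX2 : (fun ω => (∑ i, ∑ j, α ω i * β ω j * f i j) ^ 2) ^ 2
      = fun ω => ((∑ i, ∑ j, α ω i * β ω j * f i j) ^ 2) ^ 2 := rfl
  have hEXsq : μ[(fun ω => (∑ i, ∑ j, α ω i * β ω j * f i j) ^ 2) ^ 2]
      = (∑ i, ∑ k, Bq f i i k k) + (∑ i, ∑ k, Bq f i k i k) + (∑ i, ∑ k, Bq f i k k i)
        - 2 * (∑ i, Bq f i i i i) := by rw [hX2]; exact hE4
  have hEX : μ[fun ω => (∑ i, ∑ j, α ω i * β ω j * f i j) ^ 2]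
      = ∑ i, ∑ j, (f i j) ^ 2 := hE
  rw [hEXsq, hEX]
  have hfinal := final_bound f
  nlinarith [sq_nonneg (∑ i, ∑ j, (f i j) ^ 2)]
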